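/- Let g be a real Lie algebra with an abelian complex structure J and a J-invariant pluriclosed inner product (i.e. g([y,z],[w,x]) - g([x,z],[w,y]) + g([x,y],[w,z]) = 0 for all x,y,z,w). If [x,Jx] = 0 and [y,Jy] = 0, then [x,y] = 0 and [x,Jy] = 0. -/
import Mathlib


/-- With an abelian complex structure and a J-invariant pluriclosed
inner product, if `[x,Jx] = 0` and `[y,Jy] = 0` then `[x,y] = 0` and `[x,Jy] = 0`. -/
theorem bracket_vanishing_of_degenerate
    {L : Type*} [LieRing L] [LieAlgebra ℝ L]
    (J : L →ₗ[ℝ] L)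
    (hJ2 : ∀ x : L, J (J x) = -x)
    (hab : ∀ x y : L, ⁅J x, J y⁆ = ⁅x, y⁆)
    (g : L →ₗ[ℝ] L →ₗ[ℝ] ℝ)
    (hsymm : ∀ x y : L, g x y = g y x)
    (hpos : ∀ x : L, x ≠ 0 → 0 < g x x)
    (hJinv : ∀ x y : L, g (J x) (J y) = g x y)
    (hpc : ∀ x y z w : L, g ⁅y, z⁆ ⁅w, x⁆ - g ⁅x, z⁆ ⁅w, y⁆ + g ⁅x, y⁆ ⁅w, z⁆ = 0) :
    ∀ x y : L, ⁅x, J x⁆ = 0 → ⁅y, J y⁆ = 0 → ⁅x, y⁆ = 0 ∧ ⁅x, J y⁆ = 0 := by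
  intro x y hx hy
  -- abelian condition gives ⁅J x, y⁆ = -⁅x, J y⁆
  have habJ : ∀ a b : L, ⁅J a, b⁆ = -⁅a, J b⁆ := by
    intro a b
    have h := hab a (J b)
    rw [hJ2 b] at h
    rw [← h, lie_neg, neg_neg]
  have key := hpc x y (J y) (J x)
  rw [hy, habJ x y, hab x y] at key
  simp only [map_zero, LinearMap.zero_apply, map_neg, LinearMap.neg_apply] at key
  -- key : 0 - -g ⁅x, J y⁆ ⁅x, J y⁆ + g ⁅x, y⁆ ⁅x, y⁆ = 0
  have nonneg : ∀ v : L, 0 ≤ g v v := by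
    intro v
    by_cases hv : v = 0
    · simp [hv]
    · exact le_of_lt (hpos v hv)
  have h1 : g ⁅x, y⁆ ⁅x, y⁆ = 0 ∧ g ⁅x, J y⁆ ⁅x, J y⁆ = 0 := by
    constructor <;> nlinarith [nonneg ⁅x, y⁆, nonneg ⁅x, J y⁆]
  constructor
  · by_contra h
    exact absurd h1.1 (ne_of_gt (hpos _ h))
  · by_contra h
    exact absurd h1.2 (ne_of_gt (hpos _ h))
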